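/- For s ∈ ℝ let G_s^±(u) := e^{i s (u ± 1/u)}/u for u ≠ 0. Then the principal value integrals exist and are given by: P∫_ℝ G_s^+(u) du = 2πi·sgn(s)·J₀(2|s|) and P∫_ℝ G_s^−(u) du = 0; i.e., P∫_ℝ G_s^±(u) du = i(1 ± 1)π·sgn(s)·J₀(2|s|). -/

import Mathlib

open MeasureTheory Filter

/-- The 0-th Bessel function of the first kind. -/
noncomputable def J0 (z : ℝ) : ℝ :=
  ∑' n : ℕ, (-1 : ℝ) ^ n * (z / 2) ^ (2 * n) / ((Nat.factorial n : ℝ)) ^ 2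

/-- The symmetric truncated domain `I_{R,r} = [-R,-r] ∪ [r,R]`. -/
def pvSet (R r : ℝ) : Set ℝ := Set.Icc (-R) (-r) ∪ Set.Icc r R

open Finset intervalIntegral Real Complex Topology


lemma sin_pow_half (n : ℕ) :
    ∫ y in (0:ℝ)..(π/2), Real.sin y ^ (2*n)
      = (1/2) * ∫ y in (0:ℝ)..π, Real.sin y ^ (2*n) := by
  have h2 : ∫ y in (π/2:ℝ)..π, Real.sin y ^ (2*n) = ∫ y in (0:ℝ)..(π/2), Real.sin y ^ (2*n) := by
    have := intervalIntegral.integral_comp_sub_left (a := (0:ℝ)) (b := π/2)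
      (fun y => Real.sin y ^ (2*n)) π
    simp only [Real.sin_pi_sub] at this
    rw [show π - π/2 = π/2 by ring, show π - 0 = π by ring] at this
    exact this.symm
  have h3 : (∫ y in (0:ℝ)..(π/2), Real.sin y ^ (2*n)) + ∫ y in (π/2:ℝ)..π, Real.sin y ^ (2*n)
      = ∫ y in (0:ℝ)..π, Real.sin y ^ (2*n) := by
    apply intervalIntegral.integral_add_adjacent_intervals <;>
      exact (Continuous.intervalIntegrable (by continuity) _ _)
  rw [h2] at h3
  linarith

lemma cos_pow_half (n : ℕ) :
    ∫ y in (0:ℝ)..(π/2), Real.cos y ^ (2*n)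
      = π/2 * ∏ i ∈ Finset.range n, ((2 * (i:ℝ) + 1) / (2 * i + 2)) := by
  have h1 : ∫ y in (0:ℝ)..(π/2), Real.cos y ^ (2*n) = ∫ y in (0:ℝ)..(π/2), Real.sin y ^ (2*n) := by
    have := intervalIntegral.integral_comp_sub_left (a := (0:ℝ)) (b := π/2)
      (fun y => Real.sin y ^ (2*n)) (π/2)
    simp only [Real.sin_pi_div_two_sub] at this
    norm_num at this
    exact this
  rw [h1, sin_pow_half, integral_sin_pow_even]
  ring

lemma J0_summable (z : ℝ) :
    Summable (fun n : ℕ => (-1 : ℝ) ^ n * (z / 2) ^ (2 * n) / ((Nat.factorial n : ℝ)) ^ 2) := by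
  refine Summable.of_norm ?_
  refine Summable.of_nonneg_of_le (fun n => norm_nonneg _) (fun n => ?_)
    (Real.summable_pow_div_factorial ((z/2)^2))
  have h1 : (1:ℝ) ≤ (Nat.factorial n : ℝ) := by
    exact_mod_cast Nat.one_le_iff_ne_zero.2 (Nat.factorial_ne_zero n)
  rw [norm_div, norm_mul, norm_pow, norm_pow, norm_neg, norm_one, one_pow, one_mul]
  have e1 : ‖(z/2)‖ ^ (2*n) = ((z/2)^2)^n := by
    rw [pow_mul, Real.norm_eq_abs, _root_.sq_abs]
  rw [e1, norm_pow, Real.norm_natCast]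
  apply div_le_div_of_nonneg_left (by positivity) (by positivity)
  nlinarith

lemma prod_odd_even (n : ℕ) :
    ∏ i ∈ Finset.range n, ((2 * (i:ℝ) + 1) / (2 * i + 2))
      = (Nat.factorial (2*n) : ℝ) / ((Nat.factorial n : ℝ)^2 * 4 ^ n) := by
  induction n with
  | zero => simp
  | succ k ih =>
    rw [Finset.prod_range_succ, ih]
    have h1 : (Nat.factorial (2*(k+1)) : ℝ) = (2*k+2) * ((2*k+1) * Nat.factorial (2*k)) := by
      have : 2*(k+1) = (2*k+1)+1 := by ring
      rw [this, Nat.factorial_succ, Nat.factorial_succ]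
      push_cast; ring
    rw [h1]
    have h2 : (Nat.factorial (k+1) : ℝ) = (k+1) * Nat.factorial k := by
      rw [Nat.factorial_succ]; push_cast; ring
    rw [h2]
    have hk : (Nat.factorial k : ℝ) ≠ 0 := by positivity
    field_simp
    ring

lemma poisson (x : ℝ) :
    ∫ y in (0:ℝ)..(π/2), Real.cos (x * Real.cos y) = π/2 * J0 x := by
  have key : HasSum (fun n : ℕ => ∫ y in (0:ℝ)..(π/2),
      (-1:ℝ)^n * (x * Real.cos y)^(2*n) / ((2*n).factorial : ℝ))
      (∫ y in (0:ℝ)..(π/2), Real.cos (x * Real.cos y)) := by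
    apply intervalIntegral.hasSum_integral_of_dominated_convergence
      (bound := fun n _ => |x|^(2*n) / ((2*n).factorial : ℝ))
    · intro n
      apply Continuous.aestronglyMeasurable
      continuity
    · intro n
      filter_upwards with t _
      rw [norm_div, norm_mul, norm_pow, norm_pow, norm_neg, norm_one, one_pow, one_mul,
        Real.norm_natCast]
      gcongr
      rw [Real.norm_eq_abs, abs_mul]
      calc |x| * |Real.cos t| ≤ |x| * 1 := by gcongr; exact Real.abs_cos_le_one t
        _ = |x| := mul_one _
    · filter_upwards with t _
      refine Summable.of_nonneg_of_le (fun n => by positivity) (fun n => ?_)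
        (Real.summable_pow_div_factorial (x^2))
      have : |x|^(2*n) = (x^2)^n := by rw [pow_mul, _root_.sq_abs]
      rw [this]
      have hle : (Nat.factorial n : ℝ) ≤ ((2*n).factorial : ℝ) := by
        exact_mod_cast Nat.factorial_le (by omega)
      have h0 : (0:ℝ) < Nat.factorial n := by positivity
      exact div_le_div_of_nonneg_left (by positivity) h0 hle
    · apply Continuous.intervalIntegrable; continuity
    · filter_upwards with t _
      exact Real.hasSum_cos (x * Real.cos t)
  have e1 : ∀ n : ℕ, (∫ y in (0:ℝ)..(π/2),
      (-1:ℝ)^n * (x * Real.cos y)^(2*n) / ((2*n).factorial : ℝ))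
      = π/2 * ((-1:ℝ)^n * (x/2)^(2*n) / ((Nat.factorial n : ℝ))^2) := by
    intro n
    have : ∀ y : ℝ, (-1:ℝ)^n * (x * Real.cos y)^(2*n) / ((2*n).factorial : ℝ)
        = ((-1:ℝ)^n * x^(2*n) / ((2*n).factorial : ℝ)) * (Real.cos y)^(2*n) := by
      intro y; rw [mul_pow]; ring
    simp_rw [this]
    rw [intervalIntegral.integral_const_mul, cos_pow_half, prod_odd_even]
    have hf : ((2*n).factorial : ℝ) ≠ 0 := by positivity
    have hf2 : ((Nat.factorial n : ℝ)) ≠ 0 := by positivity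
    have hx : (x/2)^(2*n) = x^(2*n) / 4^n := by
      rw [div_pow, pow_mul, pow_mul, show ((2:ℝ)^2 : ℝ) = 4 by norm_num]
    rw [hx]
    field_simp
  simp_rw [e1] at key
  have h2 : HasSum (fun n : ℕ => π/2 * ((-1:ℝ)^n * (x/2)^(2*n) / ((Nat.factorial n : ℝ))^2))
      (π/2 * J0 x) := (J0_summable x).hasSum.mul_left _
  exact key.unique h2

lemma intervalIntegral_conj {f : ℝ → ℂ} {a b : ℝ} :
    ∫ x in a..b, (starRingEnd ℂ) (f x) = (starRingEnd ℂ) (∫ x in a..b, f x) := by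
  rw [intervalIntegral, intervalIntegral, map_sub, ← integral_conj, ← integral_conj]

lemma rect_repr (f : ℂ → ℂ) (hf : Differentiable ℂ f) (a b : ℝ) :
    (∫ t in a..b, f t) = (∫ t in a..b, f (t + ↑(π/2) * Complex.I))
      - Complex.I * (∫ y in (0:ℝ)..(π/2), f (b + y * Complex.I))
      + Complex.I * (∫ y in (0:ℝ)..(π/2), f (a + y * Complex.I)) := by
  have h := Complex.integral_boundary_rect_eq_zero_of_differentiableOn f a
    (b + ↑(π/2) * Complex.I) hf.differentiableOn
  simp only [Complex.add_re, Complex.ofReal_re, Complex.mul_re, Complex.I_re, Complex.I_im,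
    Complex.ofReal_im, Complex.add_im, Complex.mul_im, mul_zero, mul_one, zero_mul, sub_zero,
    zero_sub, add_zero, zero_add, neg_zero, Complex.ofReal_zero, smul_eq_mul] at h
  linear_combination h

lemma cosh_shift (x : ℝ) : Complex.cosh (x + ↑(π/2) * Complex.I) = Complex.sinh x * Complex.I := by
  rw [Complex.cosh_add, Complex.cosh_mul_I, Complex.sinh_mul_I]
  simp [← Complex.ofReal_cos, ← Complex.ofReal_sin, Real.cos_pi_div_two, Real.sin_pi_div_two]

lemma sinh_shift (x : ℝ) : Complex.sinh (x + ↑(π/2) * Complex.I) = Complex.cosh x * Complex.I := by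
  rw [Complex.sinh_add, Complex.cosh_mul_I, Complex.sinh_mul_I]
  simp [← Complex.ofReal_cos, ← Complex.ofReal_sin, Real.cos_pi_div_two, Real.sin_pi_div_two]

lemma cosh_decomp (b y : ℝ) : Complex.cosh (b + y * Complex.I)
    = ↑(Real.cosh b * Real.cos y) + ↑(Real.sinh b * Real.sin y) * Complex.I := by
  rw [Complex.cosh_add, Complex.cosh_mul_I, Complex.sinh_mul_I]
  push_cast [← Complex.ofReal_cos, ← Complex.ofReal_sin, ← Complex.ofReal_cosh,
    ← Complex.ofReal_sinh]
  ring

lemma sinh_decomp (b y : ℝ) : Complex.sinh (b + y * Complex.I)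
    = ↑(Real.sinh b * Real.cos y) + ↑(Real.cosh b * Real.sin y) * Complex.I := by
  rw [Complex.sinh_add, Complex.cosh_mul_I, Complex.sinh_mul_I]
  push_cast [← Complex.ofReal_cos, ← Complex.ofReal_sin, ← Complex.ofReal_cosh,
    ← Complex.ofReal_sinh]
  ring

lemma norm_exp_aux (s c1 c2 : ℝ) :
    ‖(Complex.exp (2 * (s:ℂ) * (↑c1 + ↑c2 * Complex.I) * Complex.I))‖
      = Real.exp (-(2 * s * c2)) := by
  rw [Complex.norm_exp]
  congr 1
  simp [Complex.mul_re, Complex.mul_im]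

lemma Fg_contAt {s : ℝ} {ε : ℂ} {u : ℝ} (hu : u ≠ 0) :
    ContinuousAt (fun u : ℝ => Complex.exp (Complex.I * s * (↑u + ε/↑u)) / ↑u) u := by
  have hu' : (u:ℂ) ≠ 0 := Complex.ofReal_ne_zero.2 hu
  apply ContinuousAt.div _ Complex.continuous_ofReal.continuousAt hu'
  apply Complex.continuous_exp.continuousAt.comp
  apply ContinuousAt.mul continuousAt_const
  apply ContinuousAt.add Complex.continuous_ofReal.continuousAt
  exact (continuousAt_const.div Complex.continuous_ofReal.continuousAt hu')

lemma reduction (s : ℝ) (ε : ℂ) {R r : ℝ} (hr : 0 < r) (hrR : r ≤ R) :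
    ∫ u in pvSet R r, Complex.exp (Complex.I * s * (↑u + ε/↑u)) / ↑u
      = ∫ t in Real.log r..Real.log R,
          (Complex.exp (Complex.I * s * (Complex.exp t + ε * Complex.exp (-t)))
            - Complex.exp (-(Complex.I * s * (Complex.exp t + ε * Complex.exp (-t))))) := by
  set F : ℝ → ℂ := fun u => Complex.exp (Complex.I * s * (↑u + ε/↑u)) / ↑u with hF
  have hR : 0 < R := lt_of_lt_of_le hr hrR
  have hcont : ∀ {c d : ℝ}, (0:ℝ) ∉ Set.uIcc c d → ContinuousOn F (Set.uIcc c d) := by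
    intro c d h0
    intro x hx
    exact (Fg_contAt (fun he => h0 (he ▸ hx))).continuousWithinAt
  -- split the set integral
  have hdisj : Disjoint (Set.Icc (-R) (-r)) (Set.Icc r R) := by
    rw [Set.disjoint_left]
    intro x hx1 hx2
    have := hx1.2; have := hx2.1; linarith
  have hint1 : IntegrableOn F (Set.Icc (-R) (-r)) := by
    apply ContinuousOn.integrableOn_Icc
    intro x hx
    exact (Fg_contAt (by intro h; rw [h] at hx; have := hx.2; simp at this; linarith)).continuousWithinAt
  have hint2 : IntegrableOn F (Set.Icc r R) := by
    apply ContinuousOn.integrableOn_Icc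
    intro x hx
    exact (Fg_contAt (by intro h; rw [h] at hx; have := hx.1; linarith)).continuousWithinAt
  have hsplit : ∫ u in pvSet R r, F u
      = (∫ u in Set.Icc (-R) (-r), F u) + ∫ u in Set.Icc r R, F u := by
    exact setIntegral_union hdisj measurableSet_Icc hint1 hint2
  -- convert to interval integrals
  have hneg : ∫ u in Set.Icc (-R) (-r), F u = ∫ u in r..R, F (-u) := by
    rw [intervalIntegral.integral_comp_neg, intervalIntegral.integral_of_le (by linarith),
      ← integral_Icc_eq_integral_Ioc]
  have hpos : ∫ u in Set.Icc r R, F u = ∫ u in r..R, F u := by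
    rw [intervalIntegral.integral_of_le hrR, ← integral_Icc_eq_integral_Ioc]
  rw [hsplit, hneg, hpos, ← intervalIntegral.integral_add]
  rotate_left
  · apply ContinuousOn.intervalIntegrable
    have h0 : (0:ℝ) ∉ Set.uIcc r R := by
      rw [Set.uIcc_of_le hrR]; intro h; exact absurd h.1 (by linarith)
    intro x hx
    have hx0 : x ≠ 0 := fun he => h0 (he ▸ hx)
    exact ((Fg_contAt (neg_ne_zero.2 hx0)).comp continuous_neg.continuousAt).continuousWithinAt
  · apply ContinuousOn.intervalIntegrable
    apply hcont
    rw [Set.uIcc_of_le hrR]; intro h; exact absurd h.1 (by linarith)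
  -- combine the two integrands
  have hcomb : ∀ u ∈ Set.uIcc r R, F (-u) + F u
      = (Complex.exp (Complex.I * s * (↑u + ε/↑u))
          - Complex.exp (-(Complex.I * s * (↑u + ε/↑u)))) / ↑u := by
    intro u hu
    rw [Set.uIcc_of_le hrR] at hu
    have hu0 : (0:ℝ) < u := lt_of_lt_of_le hr hu.1
    have hu' : (u:ℂ) ≠ 0 := Complex.ofReal_ne_zero.2 (ne_of_gt hu0)
    have e1 : ((-u : ℝ) : ℂ) = -(u:ℂ) := by push_cast; ring
    rw [hF]
    simp only [e1]
    rw [div_neg, ← neg_div]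
    have e2 : Complex.I * s * (-(u:ℂ) + ε / -(u:ℂ)) = -(Complex.I * s * (↑u + ε/↑u)) := by
      rw [div_neg, ← neg_add, mul_neg]
    rw [e2, sub_div, neg_div]
    ring
  rw [intervalIntegral.integral_congr hcomb]
  -- substitution u = exp t
  have hsub := intervalIntegral.integral_comp_smul_deriv'
    (f := Real.exp) (f' := Real.exp) (a := Real.log r) (b := Real.log R)
    (g := fun u : ℝ => (Complex.exp (Complex.I * s * (↑u + ε/↑u))
          - Complex.exp (-(Complex.I * s * (↑u + ε/↑u)))) / ↑u)
    (fun x _ => Real.hasDerivAt_exp x) Real.continuous_exp.continuousOn ?_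
  · rw [Real.exp_log hr, Real.exp_log hR] at hsub
    rw [← hsub]
    apply intervalIntegral.integral_congr
    intro t _
    have hpos : (0:ℝ) < Real.exp t := Real.exp_pos t
    have hne : ((Real.exp t : ℝ):ℂ) ≠ 0 := Complex.ofReal_ne_zero.2 (ne_of_gt hpos)
    show (Real.exp t) • _ = _
    rw [Complex.real_smul, Function.comp_apply, mul_comm, div_mul_cancel₀ _ hne,
      Complex.ofReal_exp,
      show ε / Complex.exp ↑t = ε * Complex.exp (-(t:ℂ)) by
        rw [Complex.exp_neg, div_eq_mul_inv]]
  · intro x hx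
    obtain ⟨t, _, rfl⟩ := hx
    have hpos : (0:ℝ) < Real.exp t := Real.exp_pos t
    apply ContinuousAt.continuousWithinAt
    have h1 := Fg_contAt (s := s) (ε := ε) (ne_of_gt hpos)
    have h2 : ContinuousAt (fun u : ℝ => Complex.exp (-(Complex.I * s * (↑u + ε/↑u))) / ↑u)
        (Real.exp t) := by
      apply ContinuousAt.div _ Complex.continuous_ofReal.continuousAt
        (Complex.ofReal_ne_zero.2 (ne_of_gt hpos))
      apply Complex.continuous_exp.continuousAt.comp
      apply ContinuousAt.neg
      apply ContinuousAt.mul continuousAt_const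
      apply ContinuousAt.add Complex.continuous_ofReal.continuousAt
      exact (continuousAt_const.div Complex.continuous_ofReal.continuousAt
        (Complex.ofReal_ne_zero.2 (ne_of_gt hpos)))
    have h3 := h1.sub h2
    apply h3.congr
    filter_upwards with u
    exact (sub_div _ _ _).symm

lemma edge_zero {ι : Type*} {l : Filter ι} [l.IsCountablyGenerated] {w : ι → ℝ → ℂ}
    (hcont : ∀ i, Continuous (w i))
    (hbound : ∀ᶠ i in l, ∀ y ∈ Set.Ioc (0:ℝ) (π/2), ‖w i y‖ ≤ 1)
    (hlim : ∀ y ∈ Set.Ioc (0:ℝ) (π/2), Tendsto (fun i => w i y) l (𝓝 0)) :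
    Tendsto (fun i => ∫ y in (0:ℝ)..(π/2), w i y) l (𝓝 0) := by
  have hpi : (0:ℝ) ≤ π/2 := by positivity
  have huIoc : Set.uIoc (0:ℝ) (π/2) = Set.Ioc 0 (π/2) := Set.uIoc_of_le hpi
  have := intervalIntegral.tendsto_integral_filter_of_dominated_convergence (μ := volume)
    (a := 0) (b := π/2) (f := fun _ => (0:ℂ)) (bound := fun _ => (1:ℝ))
    (F := w)
    (Eventually.of_forall fun i => (hcont i).aestronglyMeasurable)
    (by filter_upwards [hbound] with i hi
        exact Eventually.of_forall fun y hy => hi y (huIoc ▸ hy))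
    intervalIntegrable_const
    (Eventually.of_forall fun y hy => hlim y (huIoc ▸ hy))
  simpa using this

lemma sinh_tendsto_atTop : Tendsto Real.sinh atTop atTop := by
  apply tendsto_atTop_mono' atTop ?_ tendsto_id
  filter_upwards [eventually_ge_atTop (0:ℝ)] with x hx
  exact Real.self_le_sinh_iff.2 hx

lemma sinh_le_cosh (x : ℝ) : Real.sinh x ≤ Real.cosh x := by
  nlinarith [Real.cosh_eq x, Real.sinh_eq x, Real.exp_pos (-x)]

lemma cosh_tendsto_atTop : Tendsto Real.cosh atTop atTop :=
  tendsto_atTop_mono sinh_le_cosh sinh_tendsto_atTop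

lemma cosh_tendsto_atBot : Tendsto Real.cosh atBot atTop := by
  have : Tendsto (fun x : ℝ => Real.cosh (-x)) atBot atTop :=
    cosh_tendsto_atTop.comp tendsto_neg_atBot_atTop
  simpa [Real.cosh_neg] using this

noncomputable def fP (s : ℝ) : ℂ → ℂ :=
  fun z => Complex.exp (Complex.I * (s:ℂ) * (Complex.exp z + Complex.exp (-z)))

noncomputable def fM (s : ℝ) : ℂ → ℂ :=
  fun z => Complex.exp (Complex.I * (s:ℂ) * (Complex.exp z - Complex.exp (-z)))

lemma fP_diff (s : ℝ) : Differentiable ℂ (fP s) := by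
  unfold fP
  apply Complex.differentiable_exp.comp
  apply Differentiable.mul (differentiable_const _)
  exact Complex.differentiable_exp.add (Complex.differentiable_exp.comp differentiable_neg)

lemma fM_diff (s : ℝ) : Differentiable ℂ (fM s) := by
  unfold fM
  apply Complex.differentiable_exp.comp
  apply Differentiable.mul (differentiable_const _)
  exact Complex.differentiable_exp.sub (Complex.differentiable_exp.comp differentiable_neg)

lemma fP_arg (s : ℝ) (z : ℂ) :
    Complex.I * (s:ℂ) * (Complex.exp z + Complex.exp (-z)) = 2*(s:ℂ)*Complex.cosh z*Complex.I := by
  rw [Complex.cosh]; ring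

lemma fM_arg (s : ℝ) (z : ℂ) :
    Complex.I * (s:ℂ) * (Complex.exp z - Complex.exp (-z)) = 2*(s:ℂ)*Complex.sinh z*Complex.I := by
  rw [Complex.sinh]; ring

lemma fP_top (s t : ℝ) : fP s (↑t + ↑(π/2)*Complex.I)
    = ((Real.exp (-(2*s*Real.sinh t)) : ℝ) : ℂ) := by
  unfold fP
  rw [Complex.ofReal_exp]
  congr 1
  rw [fP_arg, cosh_shift]
  push_cast
  linear_combination (2*(s:ℂ)*Complex.sinh ↑t) * Complex.I_sq

lemma fM_top (s t : ℝ) : fM s (↑t + ↑(π/2)*Complex.I)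
    = ((Real.exp (-(2*s*Real.cosh t)) : ℝ) : ℂ) := by
  unfold fM
  rw [Complex.ofReal_exp]
  congr 1
  rw [fM_arg, sinh_shift]
  push_cast
  linear_combination (2*(s:ℂ)*Complex.cosh ↑t) * Complex.I_sq

lemma fP_abs (s b y : ℝ) : ‖(fP s (↑b + ↑y*Complex.I))‖
    = Real.exp (-(2*s*(Real.sinh b*Real.sin y))) := by
  unfold fP
  rw [fP_arg, cosh_decomp, norm_exp_aux]

lemma fM_abs (s b y : ℝ) : ‖(fM s (↑b + ↑y*Complex.I))‖
    = Real.exp (-(2*s*(Real.cosh b*Real.sin y))) := by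
  unfold fM
  rw [fM_arg, sinh_decomp, norm_exp_aux]

lemma edge_decay {s : ℝ} (hs : 0 < s) {l : Filter ℝ} [l.IsCountablyGenerated] (f : ℂ → ℂ)
    (hf : Differentiable ℂ f) (c : ℝ → ℝ)
    (habs : ∀ b y : ℝ, ‖(f (↑b + ↑y*Complex.I))‖ = Real.exp (-(2*s*(c b*Real.sin y))))
    (hc0 : ∀ᶠ b in l, 0 ≤ c b) (hc : Tendsto c l atTop) :
    Tendsto (fun b : ℝ => ∫ y in (0:ℝ)..(π/2), f (↑b + ↑y*Complex.I)) l (𝓝 0) := by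
  apply edge_zero
  · intro b
    apply hf.continuous.comp
    continuity
  · filter_upwards [hc0] with b hb
    intro y hy
    rw [habs, Real.exp_le_one_iff]
    have hsin : 0 ≤ Real.sin y :=
      Real.sin_nonneg_of_nonneg_of_le_pi (le_of_lt hy.1)
        (by nlinarith [Real.pi_pos, hy.2])
    have : 0 ≤ 2*s*(c b*Real.sin y) := by positivity
    linarith
  · intro y hy
    rw [tendsto_zero_iff_norm_tendsto_zero]
    simp only [habs]
    have hsin : 0 < Real.sin y :=
      Real.sin_pos_of_pos_of_lt_pi hy.1 (by nlinarith [Real.pi_pos, hy.2])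
    have h1 : Tendsto (fun b => 2*s*(c b*Real.sin y)) l atTop := by
      exact ((hc.atTop_mul_const' hsin).const_mul_atTop' (by positivity : (0:ℝ) < 2*s))
    have := Real.tendsto_exp_atBot.comp (tendsto_neg_atTop_atBot.comp h1)
    simpa [Function.comp_def] using this

lemma integrableOn_exp_sinh {s : ℝ} (hs : 0 < s) :
    IntegrableOn (fun t => Real.exp (-(2*s*Real.sinh t))) (Set.Ioi (0:ℝ)) := by
  apply Integrable.mono' (exp_neg_integrableOn_Ioi 0 (by positivity : (0:ℝ) < 2*s))
  · exact (Continuous.aestronglyMeasurable (by continuity)).restrict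
  · filter_upwards [ae_restrict_mem measurableSet_Ioi] with t ht
    rw [Real.norm_eq_abs, Real.abs_exp]
    apply Real.exp_le_exp.2
    have h1 : t ≤ Real.sinh t := Real.self_le_sinh_iff.2 (le_of_lt ht)
    nlinarith

lemma integrableOn_exp_cosh {s : ℝ} (hs : 0 < s) :
    IntegrableOn (fun t => Real.exp (-(2*s*Real.cosh t))) (Set.Ioi (0:ℝ)) := by
  apply Integrable.mono' (exp_neg_integrableOn_Ioi 0 (by positivity : (0:ℝ) < 2*s))
  · exact (Continuous.aestronglyMeasurable (by continuity)).restrict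
  · filter_upwards [ae_restrict_mem measurableSet_Ioi] with t ht
    rw [Real.norm_eq_abs, Real.abs_exp]
    apply Real.exp_le_exp.2
    have h1 : t ≤ Real.sinh t := Real.self_le_sinh_iff.2 (le_of_lt ht)
    have h2 := sinh_le_cosh t
    nlinarith

lemma top_tendsto (g : ℝ → ℝ) (hg : IntegrableOn g (Set.Ioi (0:ℝ)))
    {ι : Type*} {l : Filter ι} [l.IsCountablyGenerated] {b : ι → ℝ} (hb : Tendsto b l atTop) :
    Tendsto (fun i => ∫ t in (0:ℝ)..(b i), ((g t : ℝ) : ℂ)) l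
      (𝓝 ((∫ t in Set.Ioi (0:ℝ), g t : ℝ) : ℂ)) := by
  have h := intervalIntegral_tendsto_integral_Ioi (μ := volume) 0
    (f := fun t => ((g t : ℝ) : ℂ)) hg.ofReal hb
  have e : (∫ x in Set.Ioi (0:ℝ), ((g x : ℝ):ℂ)) = ((∫ x in Set.Ioi (0:ℝ), g x : ℝ) : ℂ) :=
    _root_.integral_ofReal
  rw [← e]
  exact h

noncomputable def Lint (s : ℝ) : ℂ := ∫ y in (0:ℝ)..(π/2), fP s (↑(0:ℝ) + ↑y*Complex.I)

lemma Phi_plus {s : ℝ} (hs : 0 < s) {ι : Type*} {l : Filter ι} [l.IsCountablyGenerated] {b : ι → ℝ}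
    (hb : Tendsto b l atTop) :
    Tendsto (fun i => ∫ t in (0:ℝ)..(b i), fP s ↑t) l
      (𝓝 (((∫ t in Set.Ioi (0:ℝ), Real.exp (-(2*s*Real.sinh t)) : ℝ) : ℂ)
            + Complex.I * Lint s)) := by
  have heq : ∀ c : ℝ, ∫ t in (0:ℝ)..c, fP s ↑t
      = (∫ t in (0:ℝ)..c, ((Real.exp (-(2*s*Real.sinh t)) : ℝ) : ℂ))
        - Complex.I * (∫ y in (0:ℝ)..(π/2), fP s (↑c + ↑y*Complex.I))
        + Complex.I * Lint s := by
    intro c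
    have h := rect_repr (fP s) (fP_diff s) 0 c
    simp only [fP_top] at h
    exact h
  simp only [heq]
  have h1 := top_tendsto (fun t => Real.exp (-(2*s*Real.sinh t))) (integrableOn_exp_sinh hs) hb
  have h2 : Tendsto (fun i => ∫ y in (0:ℝ)..(π/2), fP s (↑(b i) + ↑y*Complex.I)) l (𝓝 0) := by
    apply (edge_decay (l := atTop) hs (fP s) (fP_diff s) Real.sinh (fP_abs s) ?_ ?_).comp hb
    · filter_upwards [eventually_ge_atTop (0:ℝ)] with x hx
      simpa using Real.sinh_le_sinh.2 hx
    · exact sinh_tendsto_atTop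
  have h3 := (h1.sub (h2.const_mul Complex.I)).add_const (Complex.I * Lint s)
  simpa using h3

lemma conj_fP (s t : ℝ) : (starRingEnd ℂ) (fP s ↑t)
    = Complex.exp (-(Complex.I * ↑s * (Complex.exp ↑t + Complex.exp (-↑t)))) := by
  unfold fP
  rw [← Complex.exp_conj]
  congr 1
  simp only [map_mul, map_add, map_neg, Complex.conj_I, Complex.conj_ofReal, ← Complex.exp_conj]
  ring

lemma conj_fM (s t : ℝ) : (starRingEnd ℂ) (fM s ↑t)
    = Complex.exp (-(Complex.I * ↑s * (Complex.exp ↑t - Complex.exp (-↑t)))) := by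
  unfold fM
  rw [← Complex.exp_conj]
  congr 1
  simp only [map_mul, map_sub, map_neg, Complex.conj_I, Complex.conj_ofReal, ← Complex.exp_conj]
  ring

lemma exp_add_exp_neg (z : ℂ) : Complex.exp z + Complex.exp (-z) = 2 * Complex.cosh z := by
  rw [Complex.cosh]; ring

lemma exp_I_add_conj (c : ℝ) :
    Complex.exp (↑c*Complex.I) + (starRingEnd ℂ) (Complex.exp (↑c*Complex.I))
      = ((2*Real.cos c : ℝ) : ℂ) := by
  rw [← Complex.exp_conj]
  have e : (starRingEnd ℂ) (↑c*Complex.I) = -(↑c*Complex.I) := by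
    simp [map_mul, Complex.conj_ofReal, Complex.conj_I]
  rw [e, exp_add_exp_neg, Complex.cosh_mul_I, ← Complex.ofReal_cos]
  push_cast; ring

lemma fP_left (s y : ℝ) : fP s (↑(0:ℝ) + ↑y*Complex.I)
    = Complex.exp (↑(2*s*Real.cos y) * Complex.I) := by
  unfold fP
  congr 1
  rw [Complex.ofReal_zero, zero_add, exp_add_exp_neg, Complex.cosh_mul_I, ← Complex.ofReal_cos]
  push_cast; ring

lemma fP_cont (s : ℝ) : Continuous (fun y : ℝ => fP s (↑(0:ℝ) + ↑y*Complex.I)) :=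
  (fP_diff s).continuous.comp (by continuity)

lemma L_add_conj (s : ℝ) : Lint s + (starRingEnd ℂ) (Lint s)
    = ((2 * ∫ y in (0:ℝ)..(π/2), Real.cos (2*s*Real.cos y) : ℝ) : ℂ) := by
  unfold Lint
  have hi1 : IntervalIntegrable (fun y : ℝ => fP s (↑(0:ℝ)+↑y*Complex.I)) volume 0 (π/2) :=
    (fP_cont s).intervalIntegrable _ _
  have hi2 : IntervalIntegrable (fun y : ℝ => (starRingEnd ℂ) (fP s (↑(0:ℝ)+↑y*Complex.I)))
      volume 0 (π/2) := (Complex.continuous_conj.comp (fP_cont s)).intervalIntegrable _ _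
  rw [← intervalIntegral_conj, ← intervalIntegral.integral_add hi1 hi2]
  have e : ∀ y ∈ Set.uIcc (0:ℝ) (π/2), fP s (↑(0:ℝ)+↑y*Complex.I)
      + (starRingEnd ℂ) (fP s (↑(0:ℝ)+↑y*Complex.I))
      = ((2*Real.cos (2*s*Real.cos y) : ℝ):ℂ) := by
    intro y _
    rw [fP_left, exp_I_add_conj]
  rw [intervalIntegral.integral_congr e, intervalIntegral.integral_ofReal]
  norm_cast
  rw [← intervalIntegral.integral_const_mul]

lemma fP_even (s t : ℝ) : fP s (↑(-t)) = fP s ↑t := by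
  unfold fP
  congr 1
  rw [Complex.ofReal_neg, neg_neg]
  ring

lemma even_flip {h : ℝ → ℂ} (he : ∀ t, h (-t) = h t) (c : ℝ) :
    ∫ t in c..(0:ℝ), h t = ∫ t in (0:ℝ)..(-c), h t := by
  have e := intervalIntegral.integral_comp_neg (a := (0:ℝ)) (b := -c) h
  rw [neg_neg, neg_zero] at e
  rw [← e]
  apply intervalIntegral.integral_congr
  intro x _
  exact he x

lemma good_eventually : ∀ᶠ Rr : ℝ × ℝ in (atTop : Filter ℝ) ×ˢ nhdsWithin 0 (Set.Ioi 0),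
    (0 < Rr.2 ∧ Rr.2 ≤ 1) ∧ 1 ≤ Rr.1 := by
  apply Eventually.and
  · have hsnd : ∀ᶠ r : ℝ in nhdsWithin 0 (Set.Ioi 0), 0 < r ∧ r ≤ 1 := by
      filter_upwards [eventually_mem_nhdsWithin,
        eventually_nhdsWithin_of_eventually_nhds (eventually_le_nhds zero_lt_one)] with r h1 h2
      exact ⟨h1, h2⟩
    exact hsnd.prod_inr _
  · exact (eventually_ge_atTop 1).prod_inl _

lemma main_plus_pos {s : ℝ} (hs : 0 < s) :
    Tendsto (fun Rr : ℝ × ℝ => ∫ u in pvSet Rr.1 Rr.2,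
        Complex.exp (Complex.I * ↑s * (↑u + 1/↑u)) / ↑u)
      ((atTop : Filter ℝ) ×ˢ nhdsWithin 0 (Set.Ioi 0))
      (𝓝 (Complex.I * ((2 * (2 * ∫ y in (0:ℝ)..(π/2), Real.cos (2*s*Real.cos y)) : ℝ) : ℂ))) := by
  set l := (atTop : Filter ℝ) ×ˢ nhdsWithin (0:ℝ) (Set.Ioi 0) with hl
  set h : ℝ → ℂ := fun t => fP s ↑t - (starRingEnd ℂ) (fP s ↑t) with hh
  have hfPc : Continuous (fun t : ℝ => fP s ↑t) :=
    (fP_diff s).continuous.comp Complex.continuous_ofReal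
  have hcont : Continuous h := hfPc.sub (Complex.continuous_conj.comp hfPc)
  have he : ∀ t, h (-t) = h t := by
    intro t
    simp only [hh]
    rw [fP_even]
  have hev : ∀ᶠ p : ℝ × ℝ in l,
      (∫ u in pvSet p.1 p.2, Complex.exp (Complex.I * ↑s * (↑u + 1/↑u)) / ↑u)
        = (∫ t in (0:ℝ)..(-Real.log p.2), h t) + ∫ t in (0:ℝ)..(Real.log p.1), h t := by
    filter_upwards [good_eventually] with p hp
    obtain ⟨⟨hr0, hr1⟩, hR⟩ := hp
    rw [reduction s 1 hr0 (le_trans hr1 hR)]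
    have e1 : ∀ t : ℝ,
        (Complex.exp (Complex.I * ↑s * (Complex.exp ↑t + 1 * Complex.exp (-↑t)))
          - Complex.exp (-(Complex.I * ↑s * (Complex.exp ↑t + 1 * Complex.exp (-↑t))))) = h t := by
      intro t
      simp only [one_mul, hh, conj_fP]
      rfl
    simp only [e1]
    rw [← intervalIntegral.integral_add_adjacent_intervals
      (hcont.intervalIntegrable (Real.log p.2) 0) (hcont.intervalIntegrable 0 (Real.log p.1)),
      even_flip he]
  have intH : ∀ c : ℝ, (∫ t in (0:ℝ)..c, h t)
      = (∫ t in (0:ℝ)..c, fP s ↑t) - (starRingEnd ℂ) (∫ t in (0:ℝ)..c, fP s ↑t) := by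
    intro c
    have hi1 : IntervalIntegrable (fun t : ℝ => fP s ↑t) volume 0 c :=
      hfPc.intervalIntegrable _ _
    have hi2 : IntervalIntegrable (fun t : ℝ => (starRingEnd ℂ) (fP s ↑t)) volume 0 c :=
      (Complex.continuous_conj.comp hfPc).intervalIntegrable _ _
    rw [hh, intervalIntegral.integral_sub hi1 hi2, intervalIntegral_conj]
  set W : ℂ := ((∫ t in Set.Ioi (0:ℝ), Real.exp (-(2*s*Real.sinh t)) : ℝ) : ℂ)
      + Complex.I * Lint s with hW
  have hb : Tendsto (fun p : ℝ × ℝ => Real.log p.1) l atTop :=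
    Real.tendsto_log_atTop.comp tendsto_fst
  have ha : Tendsto (fun p : ℝ × ℝ => -Real.log p.2) l atTop :=
    tendsto_neg_atBot_atTop.comp (Real.tendsto_log_nhdsGT_zero.comp tendsto_snd)
  have h1 := Phi_plus hs hb
  have h2 := Phi_plus hs ha
  have h1c := (Complex.continuous_conj.tendsto W).comp h1
  have h2c := (Complex.continuous_conj.tendsto W).comp h2
  have hsum := ((h2.sub h2c).add (h1.sub h1c))
  have final : Tendsto (fun p : ℝ × ℝ =>
      (∫ t in (0:ℝ)..(-Real.log p.2), h t) + ∫ t in (0:ℝ)..(Real.log p.1), h t) l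
      (𝓝 ((W - (starRingEnd ℂ) W) + (W - (starRingEnd ℂ) W))) := by
    simp only [intH]
    exact hsum
  have hval : (W - (starRingEnd ℂ) W) + (W - (starRingEnd ℂ) W)
      = Complex.I * ((2 * (2 * ∫ y in (0:ℝ)..(π/2), Real.cos (2*s*Real.cos y)) : ℝ) : ℂ) := by
    rw [hW]
    simp only [map_add, map_mul, Complex.conj_I, Complex.conj_ofReal]
    have hL := L_add_conj s
    push_cast at hL ⊢
    linear_combination (2*Complex.I) * hL
  rw [← hval]
  exact final.congr' ((hev.mono fun p hp => hp.symm))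

lemma fM_real_even (s t : ℝ) : ((Real.exp (-(2*s*Real.cosh (-t))) : ℝ) : ℂ)
    = ((Real.exp (-(2*s*Real.cosh t)) : ℝ) : ℂ) := by
  rw [Real.cosh_neg]

lemma Bfull {s : ℝ} (hs : 0 < s) {ι : Type*} {l : Filter ι} [l.IsCountablyGenerated]
    {a b : ι → ℝ} (ha : Tendsto a l atBot) (hb : Tendsto b l atTop) :
    Tendsto (fun i => (∫ t in (a i)..(b i), fM s ↑t)
        - (starRingEnd ℂ) (∫ t in (a i)..(b i), fM s ↑t)) l (𝓝 0) := by
  set A : ℝ := ∫ t in Set.Ioi (0:ℝ), Real.exp (-(2*s*Real.cosh t)) with hA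
  have hfMc : Continuous (fun t : ℝ => fM s ↑t) :=
    (fM_diff s).continuous.comp Complex.continuous_ofReal
  have hgc : Continuous (fun t : ℝ => ((Real.exp (-(2*s*Real.cosh t)) : ℝ) : ℂ)) := by
    continuity
  -- the interval integral of fM tends to 2A (a real number)
  have hB : Tendsto (fun i => ∫ t in (a i)..(b i), fM s ↑t) l (𝓝 ((A:ℂ) + (A:ℂ))) := by
    have heq : ∀ i, ∫ t in (a i)..(b i), fM s ↑t
        = ((∫ t in (0:ℝ)..(-(a i)), ((Real.exp (-(2*s*Real.cosh t)) : ℝ) : ℂ))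
            + ∫ t in (0:ℝ)..(b i), ((Real.exp (-(2*s*Real.cosh t)) : ℝ) : ℂ))
          - Complex.I * (∫ y in (0:ℝ)..(π/2), fM s (↑(b i) + ↑y*Complex.I))
          + Complex.I * (∫ y in (0:ℝ)..(π/2), fM s (↑(a i) + ↑y*Complex.I)) := by
      intro i
      have h := rect_repr (fM s) (fM_diff s) (a i) (b i)
      simp only [fM_top] at h
      rw [h]
      congr 2
      rw [← intervalIntegral.integral_add_adjacent_intervals
        (hgc.intervalIntegrable (a i) 0) (hgc.intervalIntegrable 0 (b i)),
        even_flip (fun t => fM_real_even s t)]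
    simp only [heq]
    have h1 := top_tendsto (fun t => Real.exp (-(2*s*Real.cosh t))) (integrableOn_exp_cosh hs)
      (tendsto_neg_atBot_atTop.comp ha)
    have h2 := top_tendsto (fun t => Real.exp (-(2*s*Real.cosh t))) (integrableOn_exp_cosh hs) hb
    have h3 : Tendsto (fun i => ∫ y in (0:ℝ)..(π/2), fM s (↑(b i) + ↑y*Complex.I)) l (𝓝 0) := by
      apply (edge_decay (l := atTop) hs (fM s) (fM_diff s) Real.cosh (fM_abs s) ?_ ?_).comp hb
      · exact Eventually.of_forall fun x => by positivity
      · exact cosh_tendsto_atTop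
    have h4 : Tendsto (fun i => ∫ y in (0:ℝ)..(π/2), fM s (↑(a i) + ↑y*Complex.I)) l (𝓝 0) := by
      apply (edge_decay (l := atBot) hs (fM s) (fM_diff s) Real.cosh (fM_abs s) ?_ ?_).comp ha
      · exact Eventually.of_forall fun x => by positivity
      · exact cosh_tendsto_atBot
    have := ((h1.add h2).sub (h3.const_mul Complex.I)).add (h4.const_mul Complex.I)
    simpa using this
  have hBc := (Complex.continuous_conj.tendsto _).comp hB
  have := hB.sub hBc
  simp only [Function.comp] at this
  have hcval : (starRingEnd ℂ) ((A:ℂ) + (A:ℂ)) = (A:ℂ) + (A:ℂ) := by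
    simp [Complex.conj_ofReal]
  rw [hcval] at this
  simpa using this

lemma main_minus_pos {s : ℝ} (hs : 0 < s) :
    Tendsto (fun Rr : ℝ × ℝ => ∫ u in pvSet Rr.1 Rr.2,
        Complex.exp (Complex.I * ↑s * (↑u + (-1)/↑u)) / ↑u)
      ((atTop : Filter ℝ) ×ˢ nhdsWithin 0 (Set.Ioi 0)) (𝓝 0) := by
  set l := (atTop : Filter ℝ) ×ˢ nhdsWithin (0:ℝ) (Set.Ioi 0) with hl
  have hb : Tendsto (fun p : ℝ × ℝ => Real.log p.1) l atTop :=
    Real.tendsto_log_atTop.comp tendsto_fst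
  have ha : Tendsto (fun p : ℝ × ℝ => Real.log p.2) l atBot :=
    Real.tendsto_log_nhdsGT_zero.comp tendsto_snd
  have hfMc : Continuous (fun t : ℝ => fM s ↑t) :=
    (fM_diff s).continuous.comp Complex.continuous_ofReal
  have hev : ∀ᶠ p : ℝ × ℝ in l,
      (∫ u in pvSet p.1 p.2, Complex.exp (Complex.I * ↑s * (↑u + (-1)/↑u)) / ↑u)
        = (∫ t in (Real.log p.2)..(Real.log p.1), fM s ↑t)
          - (starRingEnd ℂ) (∫ t in (Real.log p.2)..(Real.log p.1), fM s ↑t) := by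
    filter_upwards [good_eventually] with p hp
    obtain ⟨⟨hr0, hr1⟩, hR⟩ := hp
    rw [reduction s (-1) hr0 (le_trans hr1 hR)]
    have e1 : ∀ t : ℝ,
        (Complex.exp (Complex.I * ↑s * (Complex.exp ↑t + (-1) * Complex.exp (-↑t)))
          - Complex.exp (-(Complex.I * ↑s * (Complex.exp ↑t + (-1) * Complex.exp (-↑t)))))
        = fM s ↑t - (starRingEnd ℂ) (fM s ↑t) := by
      intro t
      have e : Complex.I * ↑s * (Complex.exp ↑t + (-1) * Complex.exp (-↑t))
          = Complex.I * ↑s * (Complex.exp ↑t - Complex.exp (-↑t)) := by ring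
      rw [e, conj_fM]
      rfl
    simp only [e1]
    have hi1 : IntervalIntegrable (fun t : ℝ => fM s ↑t) volume (Real.log p.2) (Real.log p.1) :=
      hfMc.intervalIntegrable _ _
    have hi2 : IntervalIntegrable (fun t : ℝ => (starRingEnd ℂ) (fM s ↑t)) volume
        (Real.log p.2) (Real.log p.1) :=
      (Complex.continuous_conj.comp hfMc).intervalIntegrable _ _
    rw [intervalIntegral.integral_sub hi1 hi2, _root_.intervalIntegral_conj]
  exact (Bfull hs ha hb).congr' ((hev.mono fun p hp => hp.symm))


lemma conj_integrand (s : ℝ) (ε : ℂ) (hε : (starRingEnd ℂ) ε = ε) (u : ℝ) :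
    (starRingEnd ℂ) (Complex.exp (Complex.I*((-s : ℝ):ℂ)*(↑u + ε/↑u))/↑u)
      = Complex.exp (Complex.I*(s:ℂ)*(↑u + ε/↑u))/↑u := by
  rw [map_div₀, ← Complex.exp_conj, Complex.conj_ofReal]
  congr 2
  rw [map_mul, map_mul, map_add, map_div₀, hε, Complex.conj_I, Complex.conj_ofReal,
    Complex.conj_ofReal]
  push_cast; ring

/-- the principal value integrals of `G_s^±(u) = e^{is(u ± 1/u)}/u` exist
and equal `i(1 ± 1)π sgn(s) J₀(2|s|)`, i.e. `P∫ G_s^+ = 2πi sgn(s) J₀(2|s|)` and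
`P∫ G_s^- = 0`. -/
theorem pv_integral_Gpm (s : ℝ) :
    Tendsto (fun Rr : ℝ × ℝ =>
        ∫ u in pvSet Rr.1 Rr.2,
          Complex.exp (Complex.I * (s : ℂ) * ((u : ℂ) + 1 / (u : ℂ))) / (u : ℂ))
      ((atTop : Filter ℝ) ×ˢ nhdsWithin 0 (Set.Ioi 0))
      (nhds (Complex.I * ((2 * Real.pi * Real.sign s * J0 (2 * |s|) : ℝ) : ℂ))) ∧
    Tendsto (fun Rr : ℝ × ℝ =>
        ∫ u in pvSet Rr.1 Rr.2,
          Complex.exp (Complex.I * (s : ℂ) * ((u : ℂ) - 1 / (u : ℂ))) / (u : ℂ))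
      ((atTop : Filter ℝ) ×ˢ nhdsWithin 0 (Set.Ioi 0)) (nhds 0) := by
  constructor
  · -- plus case
    rcases lt_trichotomy s 0 with hneg | hzero | hpos
    · -- s < 0 : take conjugates of the positive case
      have hs' : 0 < -s := by linarith
      have H := main_plus_pos hs'
      have Hc := (Complex.continuous_conj.tendsto _).comp H
      have heq : ∀ p : ℝ × ℝ,
          (starRingEnd ℂ) (∫ u in pvSet p.1 p.2,
              Complex.exp (Complex.I * ((-s:ℝ):ℂ) * ((u:ℂ) + 1/(u:ℂ))) / (u:ℂ))
            = ∫ u in pvSet p.1 p.2,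
              Complex.exp (Complex.I * (s:ℂ) * ((u:ℂ) + 1/(u:ℂ))) / (u:ℂ) := by
        intro p
        rw [← integral_conj]
        exact integral_congr_ae (Eventually.of_forall fun u => conj_integrand s 1 (map_one _) u)
      have Hc2 := Hc.congr heq
      have hval : (starRingEnd ℂ) (Complex.I *
            ((2 * (2 * ∫ y in (0:ℝ)..(π/2), Real.cos (2*(-s)*Real.cos y)) : ℝ) : ℂ))
          = Complex.I * ((2 * Real.pi * Real.sign s * J0 (2 * |s|) : ℝ) : ℂ) := by
        rw [poisson (2*(-s)), Real.sign_of_neg hneg, abs_of_neg hneg]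
        rw [map_mul, Complex.conj_I, Complex.conj_ofReal]
        push_cast
        ring
      rw [hval] at Hc2
      exact Hc2
    · -- s = 0
      subst hzero
      have hev : ∀ᶠ p : ℝ × ℝ in (atTop : Filter ℝ) ×ˢ nhdsWithin 0 (Set.Ioi 0),
          (∫ u in pvSet p.1 p.2,
            Complex.exp (Complex.I * ((0:ℝ):ℂ) * ((u:ℂ) + 1/(u:ℂ))) / (u:ℂ)) = 0 := by
        filter_upwards [good_eventually] with p hp
        obtain ⟨⟨hr0, hr1⟩, hR⟩ := hp
        rw [reduction 0 1 hr0 (le_trans hr1 hR)]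
        simp
      have h0 : Tendsto (fun _ : ℝ × ℝ => (0:ℂ))
          ((atTop : Filter ℝ) ×ˢ nhdsWithin 0 (Set.Ioi 0)) (𝓝 0) := tendsto_const_nhds
      have := h0.congr' (hev.mono fun p hp => hp.symm)
      simpa [Real.sign_zero] using this
    · -- s > 0
      have H := main_plus_pos hpos
      have hval : (2 * (2 * ∫ y in (0:ℝ)..(π/2), Real.cos (2*s*Real.cos y)) : ℝ)
          = 2 * Real.pi * Real.sign s * J0 (2 * |s|) := by
        rw [poisson (2*s), Real.sign_of_pos hpos, abs_of_pos hpos]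
        ring
      rw [hval] at H
      exact H
  · -- minus case
    have hrw : ∀ (c : ℝ) (u : ℝ), Complex.exp (Complex.I * (c:ℂ) * ((u:ℂ) - 1/(u:ℂ))) / (u:ℂ)
        = Complex.exp (Complex.I * (c:ℂ) * ((u:ℂ) + (-1)/(u:ℂ))) / (u:ℂ) := by
      intro c u
      rw [sub_eq_add_neg, neg_div, ← neg_div]
    simp only [hrw]
    rcases lt_trichotomy s 0 with hneg | hzero | hpos
    · have hs' : 0 < -s := by linarith
      have H := main_minus_pos hs'
      have Hc := (Complex.continuous_conj.tendsto _).comp H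
      have heq : ∀ p : ℝ × ℝ,
          (starRingEnd ℂ) (∫ u in pvSet p.1 p.2,
              Complex.exp (Complex.I * ((-s:ℝ):ℂ) * ((u:ℂ) + (-1)/(u:ℂ))) / (u:ℂ))
            = ∫ u in pvSet p.1 p.2,
              Complex.exp (Complex.I * (s:ℂ) * ((u:ℂ) + (-1)/(u:ℂ))) / (u:ℂ) := by
        intro p
        rw [← integral_conj]
        refine integral_congr_ae (Eventually.of_forall fun u => conj_integrand s (-1) ?_ u)
        simp
      have Hc2 := Hc.congr heq
      simpa using Hc2
    · subst hzero
      have hev : ∀ᶠ p : ℝ × ℝ in (atTop : Filter ℝ) ×ˢ nhdsWithin 0 (Set.Ioi 0),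
          (∫ u in pvSet p.1 p.2,
            Complex.exp (Complex.I * ((0:ℝ):ℂ) * ((u:ℂ) + (-1)/(u:ℂ))) / (u:ℂ)) = 0 := by
        filter_upwards [good_eventually] with p hp
        obtain ⟨⟨hr0, hr1⟩, hR⟩ := hp
        rw [reduction 0 (-1) hr0 (le_trans hr1 hR)]
        simp
      have h0 : Tendsto (fun _ : ℝ × ℝ => (0:ℂ))
          ((atTop : Filter ℝ) ×ˢ nhdsWithin 0 (Set.Ioi 0)) (𝓝 0) := tendsto_const_nhds
      exact h0.congr' (hev.mono fun p hp => hp.symm)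
    · exact main_minus_pos hpos
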